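/- Assume the compatibility relation: ρ₂ = ρ₁ − ρ₁ρ₄ + ψ₁ if m₁ ≤ m₂, and ρ₂ = ρ₁ − 1 + ρ₂ρ₄ + ψ₁ if m₁ > m₂. For i ∈ {1,…,n₁}, j ∈ {1,…,n₂}, k ∈ {1,…,n₃}, set t̂₃ := t₃ − (m₃/n₂)t₂ − ((n₂−m₃)/n₂)(m₁/n₁)t₁ + ((m₁−m₂)/n₁)t₁ + ρ₃t₂ − (m₃/n₂)ρ₁t₁ + ρ₂t₁, θ_{i,j,k} := 2πι(k − (m₃/n₂)j − ((n₂−m₃)/n₂)(m₁/n₁)i + ((m₁−m₂)/n₁)i + t̂₃)/n₃, and z_{i,j,k} := (e^{sθ_{i,j,k}})_{s=0}^{n₃−1} ∈ ℂ^{n₃}. Then K₃ (z_{i,j,k} ⊗ y_{i,j} ⊗ xᵢ) = δz⁻¹(e^{θ_{i,j,k}} − 1) · (z_{i,j,k} ⊗ y_{i,j} ⊗ xᵢ), where xᵢ and y_{i,j} are as in Theorem 4.2 and ⊗ is the Kronecker product. (Theorem 4.3: eigenpairs of K₃ in the case cos θα − cos θβ cos θγ ≥ 0.) -/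
import Mathlib


open Real Matrix

/-- The `n₁×n₁` block `S(a) = [[0, e^{−2πι t₁} I_a], [I_{n₁−a}, 0]]` with top-right
block of size `a × a` and bottom-left block of size `(n₁−a) × (n₁−a)`. -/
noncomputable def Sblk (n₁ : ℕ) (t₁ : ℝ) (a : ℕ) : Matrix (Fin n₁) (Fin n₁) ℂ :=
  Matrix.of fun s s' =>
    (if (s : ℕ) < a ∧ (s' : ℕ) = (s : ℕ) + (n₁ - a)
      then Complex.exp (-(2 * (π : ℂ) * Complex.I * (t₁ : ℂ))) else 0)
    + (if a ≤ (s : ℕ) ∧ (s' : ℕ) + a = (s : ℕ) then 1 else 0)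

/-- `J₁ = e^{2πι ρ₂ t₁} S(m₂)`. -/
noncomputable def J1 (n₁ : ℕ) (t₁ : ℝ) (ρ₂ m₂ : ℕ) : Matrix (Fin n₁) (Fin n₁) ℂ :=
  Complex.exp (2 * (π : ℂ) * Complex.I * (ρ₂ : ℂ) * (t₁ : ℂ)) • Sblk n₁ t₁ m₂

/-- `J₃` in the case `cos θα − cos θβ cos θγ ≥ 0`: an `n₂ × n₂` block matrix with
`n₁ × n₁` blocks, top-right block `e^{−2πι(t₂+ρ₁ρ₄t₁−ψ₁t₁)} I_{m₃} ⊗ S(m₂−m₁)` if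
`m₁ ≤ m₂` (resp. `e^{−2πι(t₂−ρ₂ρ₄t₁−ψ₁t₁)} I_{m₃} ⊗ S(n₁−m₁+m₂)` if `m₁ > m₂`),
bottom-left block `I_{n₂−m₃} ⊗ J₁`, all scaled by `e^{2πι ρ₃ t₂}`. -/
noncomputable def J3acute (n₁ n₂ : ℕ) (t₁ t₂ : ℝ) (ρ₁ ρ₂ ρ₃ ρ₄ ψ₁ m₁ m₂ m₃ : ℕ) :
    Matrix (Fin n₂ × Fin n₁) (Fin n₂ × Fin n₁) ℂ :=
  Matrix.of fun p q =>
    Complex.exp (2 * (π : ℂ) * Complex.I * (ρ₃ : ℂ) * (t₂ : ℂ)) *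
      ((if (p.1 : ℕ) < m₃ ∧ (q.1 : ℕ) = (p.1 : ℕ) + (n₂ - m₃) then
          (if m₁ ≤ m₂ then
            Complex.exp (-(2 * (π : ℂ) * Complex.I
                * ((t₂ : ℂ) + (ρ₁ : ℂ) * (ρ₄ : ℂ) * (t₁ : ℂ) - (ψ₁ : ℂ) * (t₁ : ℂ))))
              * Sblk n₁ t₁ (m₂ - m₁) p.2 q.2
          else
            Complex.exp (-(2 * (π : ℂ) * Complex.I
                * ((t₂ : ℂ) - (ρ₂ : ℂ) * (ρ₄ : ℂ) * (t₁ : ℂ) - (ψ₁ : ℂ) * (t₁ : ℂ))))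
              * Sblk n₁ t₁ (n₁ - m₁ + m₂) p.2 q.2)
        else 0)
      + (if m₃ ≤ (p.1 : ℕ) ∧ (q.1 : ℕ) + m₃ = (p.1 : ℕ)
          then J1 n₁ t₁ ρ₂ m₂ p.2 q.2 else 0))

/-- The Yee discretization `K₃` of `∂z`: `n₃ × n₃` block matrix with
`n₁n₂ × n₁n₂` blocks, `(1/δz)` times [`−I` on the block diagonal, `I` on the block
superdiagonal, `e^{2πι t₃} J₃` at block `(n₃−1, 0)`]. -/
noncomputable def K3 (n₁ n₂ n₃ : ℕ) (δz t₃ : ℝ)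
    (J : Matrix (Fin n₂ × Fin n₁) (Fin n₂ × Fin n₁) ℂ) :
    Matrix (Fin n₃ × Fin n₂ × Fin n₁) (Fin n₃ × Fin n₂ × Fin n₁) ℂ :=
  Matrix.of fun p q =>
    (1 / (δz : ℂ)) *
      ((if (q.1 : ℕ) = (p.1 : ℕ) + 1 ∧ q.2 = p.2 then 1 else 0)
        + (if (p.1 : ℕ) = n₃ - 1 ∧ (q.1 : ℕ) = 0
            then Complex.exp (2 * (π : ℂ) * Complex.I * (t₃ : ℂ)) * J p.2 q.2 else 0)
        - (if p = q then 1 else 0))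


lemma sum_shift {n : ℕ} (a : ℕ) (ha : a ≤ n) (c d : ℂ) (f : Fin n → ℂ) (s : Fin n) :
    (∑ s' : Fin n, ((if (s : ℕ) < a ∧ (s' : ℕ) = (s : ℕ) + (n - a) then c else 0)
      + (if a ≤ (s : ℕ) ∧ (s' : ℕ) + a = (s : ℕ) then d else 0)) * f s')
    = if h : (s : ℕ) < a
      then c * f ⟨(s : ℕ) + (n - a), by omega⟩
      else d * f ⟨(s : ℕ) - a, by omega⟩ := by
  simp only [add_mul, ite_mul, zero_mul, Finset.sum_add_distrib]
  by_cases h : (s : ℕ) < a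
  · rw [dif_pos h]
    have h2 : (∑ s' : Fin n, if a ≤ (s:ℕ) ∧ (s':ℕ) + a = (s:ℕ) then d * f s' else 0) = 0 :=
      Finset.sum_eq_zero fun s' _ => by
        rw [if_neg]; rintro ⟨h2, -⟩; omega
    rw [h2, add_zero]
    rw [Finset.sum_eq_single (⟨(s:ℕ) + (n - a), by omega⟩ : Fin n)]
    · rw [if_pos ⟨h, rfl⟩]
    · intro b _ hb
      rw [if_neg]; rintro ⟨-, hb2⟩; exact hb (Fin.ext hb2)
    · intro hmem; exact absurd (Finset.mem_univ _) hmem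
  · rw [dif_neg h]
    have h1 : (∑ s' : Fin n, if (s:ℕ) < a ∧ (s':ℕ) = (s:ℕ) + (n-a) then c * f s' else 0) = 0 :=
      Finset.sum_eq_zero fun s' _ => by
        rw [if_neg]; rintro ⟨h1, -⟩; omega
    rw [h1, zero_add]
    rw [Finset.sum_eq_single (⟨(s:ℕ) - a, by omega⟩ : Fin n)]
    · rw [if_pos ⟨Nat.le_of_not_lt h, by simp; omega⟩]
    · intro b _ hb
      rw [if_neg]; rintro ⟨h2, hb2⟩; exact hb (Fin.ext (by simp; omega))
    · intro hmem; exact absurd (Finset.mem_univ _) hmem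

lemma sum_shift_exp {n : ℕ} (a : ℕ) (ha : a ≤ n) (c d θ : ℂ)
    (hcd : c * Complex.exp ((n : ℂ) * θ) = d)
    (f : Fin n → ℂ) (hf : ∀ s : Fin n, f s = Complex.exp (((s : ℕ) : ℂ) * θ)) (s : Fin n) :
    (∑ s' : Fin n, ((if (s : ℕ) < a ∧ (s' : ℕ) = (s : ℕ) + (n - a) then c else 0)
      + (if a ≤ (s : ℕ) ∧ (s' : ℕ) + a = (s : ℕ) then d else 0)) * f s')
    = d * Complex.exp (-(a : ℂ) * θ) * f s := by
  rw [sum_shift a ha]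
  split_ifs with h
  · rw [hf, hf, ← hcd]
    have hc1 : (((⟨(s:ℕ) + (n-a), by omega⟩ : Fin n) : ℕ) : ℂ) = (s:ℕ) + ((n:ℂ) - a) := by
      push_cast [Nat.cast_sub ha]; ring
    rw [hc1, mul_assoc, mul_assoc, ← Complex.exp_add, ← Complex.exp_add]
    congr 1
    ring
  · rw [hf, hf]
    have hc1 : (((⟨(s:ℕ) - a, by omega⟩ : Fin n) : ℕ) : ℂ) = ((s:ℕ):ℂ) - a := by
      push_cast [Nat.cast_sub (Nat.le_of_not_lt h)]; ring
    rw [hc1, mul_assoc, ← Complex.exp_add]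
    congr 1
    ring

/-- Eigenvector property of `Sblk`. -/
lemma Sblk_sum {n₁ : ℕ} (t₁ : ℝ) (a : ℕ) (ha : a ≤ n₁) (θ : ℂ)
    (hE : Complex.exp (-(2 * (π : ℂ) * Complex.I * (t₁ : ℂ)))
      * Complex.exp ((n₁ : ℂ) * θ) = 1)
    (x : Fin n₁ → ℂ) (hx : ∀ s : Fin n₁, x s = Complex.exp (((s : ℕ) : ℂ) * θ))
    (s : Fin n₁) :
    (∑ s' : Fin n₁, Sblk n₁ t₁ a s s' * x s')
      = Complex.exp (-(a : ℂ) * θ) * x s := by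
  have := sum_shift_exp a ha _ 1 θ hE x hx s
  simpa [Sblk] using this
/-- Theorem 4.3: eigenpairs of `K₃` in the case `cos θα − cos θβ cos θγ ≥ 0`. -/
theorem stmt_7 (n₁ n₂ n₃ : ℕ) (hn₁ : 1 ≤ n₁) (hn₂ : 1 ≤ n₂) (hn₃ : 1 ≤ n₃)
    (δz : ℝ) (hδz : 0 < δz) (t₁ t₂ t₃ : ℝ)
    (ρ₁ ρ₂ ρ₃ ρ₄ ψ₁ : ℕ) (hρ₁ : ρ₁ ≤ 1) (hρ₂ : ρ₂ ≤ 1) (hρ₃ : ρ₃ ≤ 1)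
    (hρ₄ : ρ₄ ≤ 1) (hψ₁ : ψ₁ ≤ 1)
    (m₁ m₂ m₃ : ℕ) (hm₁ : m₁ ≤ n₁) (hm₂ : m₂ ≤ n₁) (hm₃ : m₃ ≤ n₂)
    (hcompat₁ : m₁ ≤ m₂ → (ρ₂ : ℤ) = (ρ₁ : ℤ) - (ρ₁ : ℤ) * ρ₄ + ψ₁)
    (hcompat₂ : m₂ < m₁ → (ρ₂ : ℤ) = (ρ₁ : ℤ) - 1 + (ρ₂ : ℤ) * ρ₄ + ψ₁)
    (i j k : ℕ) (hi : 1 ≤ i) (hin : i ≤ n₁) (hj : 1 ≤ j) (hjn : j ≤ n₂)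
    (hk : 1 ≤ k) (hkn : k ≤ n₃)
    (θi : ℂ) (hθi : θi = 2 * (π : ℂ) * Complex.I * ((i : ℂ) + (t₁ : ℂ)) / (n₁ : ℂ))
    (x : Fin n₁ → ℂ) (hx : ∀ s : Fin n₁, x s = Complex.exp (((s : ℕ) : ℂ) * θi))
    (t₂hat : ℝ) (ht₂hat : t₂hat = t₂ - (m₁ : ℝ) / n₁ * t₁ + (ρ₁ : ℝ) * t₁)
    (θij : ℂ)
    (hθij : θij = 2 * (π : ℂ) * Complex.I
      * ((((j : ℝ) - (m₁ : ℝ) / n₁ * i + t₂hat : ℝ)) : ℂ) / (n₂ : ℂ))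
    (y : Fin n₂ → ℂ) (hy : ∀ s : Fin n₂, y s = Complex.exp (((s : ℕ) : ℂ) * θij))
    (t₃hat : ℝ)
    (ht₃hat : t₃hat = t₃ - (m₃ : ℝ) / n₂ * t₂
      - ((n₂ : ℝ) - m₃) / n₂ * ((m₁ : ℝ) / n₁) * t₁
      + ((m₁ : ℝ) - m₂) / n₁ * t₁
      + (ρ₃ : ℝ) * t₂ - (m₃ : ℝ) / n₂ * ((ρ₁ : ℝ) * t₁) + (ρ₂ : ℝ) * t₁)
    (θijk : ℂ)
    (hθijk : θijk = 2 * (π : ℂ) * Complex.I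
      * ((((k : ℝ) - (m₃ : ℝ) / n₂ * j
          - ((n₂ : ℝ) - m₃) / n₂ * ((m₁ : ℝ) / n₁) * i
          + ((m₁ : ℝ) - m₂) / n₁ * i + t₃hat : ℝ)) : ℂ) / (n₃ : ℂ))
    (z : Fin n₃ → ℂ) (hz : ∀ s : Fin n₃, z s = Complex.exp (((s : ℕ) : ℂ) * θijk)) :
    (K3 n₁ n₂ n₃ δz t₃ (J3acute n₁ n₂ t₁ t₂ ρ₁ ρ₂ ρ₃ ρ₄ ψ₁ m₁ m₂ m₃)).mulVec
        (fun p => z p.1 * y p.2.1 * x p.2.2)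
      = ((1 / (δz : ℂ)) * (Complex.exp θijk - 1))
          • (fun p => z p.1 * y p.2.1 * x p.2.2) := by


  -- nonzero casts
  have hne1 : (n₁:ℂ) ≠ 0 := Nat.cast_ne_zero.2 (by omega)
  have hne2 : (n₂:ℂ) ≠ 0 := Nat.cast_ne_zero.2 (by omega)
  have hne3 : (n₃:ℂ) ≠ 0 := Nat.cast_ne_zero.2 (by omega)
  have hre1 : (n₁:ℝ) ≠ 0 := Nat.cast_ne_zero.2 (by omega)
  have hre2 : (n₂:ℝ) ≠ 0 := Nat.cast_ne_zero.2 (by omega)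
  -- division-free exponent relations
  have Z1 : (n₁:ℂ) * θi = 2*(π:ℂ)*Complex.I*((i:ℂ) + (t₁:ℂ)) := by
    rw [hθi]; field_simp
  have Z2 : (n₂:ℂ) * θij + (m₁:ℂ) * θi
      = 2*(π:ℂ)*Complex.I*((j:ℂ) + (t₂:ℂ) + (ρ₁:ℂ)*(t₁:ℂ)) := by
    rw [hθij, ht₂hat, hθi]; push_cast; field_simp; ring
  have Z3 : (n₃:ℂ) * θijk + (m₃:ℂ) * θij + (m₂:ℂ) * θi
      = 2*(π:ℂ)*Complex.I*((k:ℂ) + (t₃:ℂ) + (ρ₃:ℂ)*(t₂:ℂ) + (ρ₂:ℂ)*(t₁:ℂ)) := by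
    have key : (((k : ℝ) - (m₃ : ℝ) / n₂ * j
          - ((n₂ : ℝ) - m₃) / n₂ * ((m₁ : ℝ) / n₁) * i
          + ((m₁ : ℝ) - m₂) / n₁ * i + t₃hat))
        + (m₃:ℝ)/n₂ * ((j : ℝ) - (m₁ : ℝ) / n₁ * i + t₂hat)
        + (m₂:ℝ)/n₁ * ((i:ℝ) + t₁)
        = k + t₃ + (ρ₃:ℝ)*t₂ + (ρ₂:ℝ)*t₁ := by
      rw [ht₃hat, ht₂hat]; field_simp; ring
    have W3 : (n₃:ℂ) * θijk = 2 * (π : ℂ) * Complex.I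
        * ((((k : ℝ) - (m₃ : ℝ) / n₂ * j
          - ((n₂ : ℝ) - m₃) / n₂ * ((m₁ : ℝ) / n₁) * i
          + ((m₁ : ℝ) - m₂) / n₁ * i + t₃hat : ℝ)) : ℂ) := by
      rw [hθijk, mul_comm ((n₃:ℂ)), div_mul_cancel₀ _ hne3]
    have keyC := congrArg (Complex.ofReal) key
    push_cast at keyC
    rw [W3, hθij, hθi]
    push_cast
    linear_combination (2*(π:ℂ)*Complex.I) * keyC
  -- block S eigenrelation
  have hE1 : Complex.exp (-(2*(π:ℂ)*Complex.I*(t₁:ℂ))) * Complex.exp ((n₁:ℂ)*θi) = 1 := by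
    rw [← Complex.exp_add, Complex.exp_eq_one_iff]
    exact ⟨i, by push_cast; linear_combination Z1⟩
  have hSx : ∀ a : ℕ, a ≤ n₁ → ∀ s : Fin n₁,
      (∑ s' : Fin n₁, Sblk n₁ t₁ a s s' * x s')
        = Complex.exp (-((a:ℕ):ℂ)*θi) * x s :=
    fun a ha s => Sblk_sum t₁ a ha θi hE1 x hx s
  have hJ1x : ∀ s : Fin n₁, (∑ s' : Fin n₁, J1 n₁ t₁ ρ₂ m₂ s s' * x s')
      = (Complex.exp (2*(π:ℂ)*Complex.I*(ρ₂:ℂ)*(t₁:ℂ)) * Complex.exp (-((m₂:ℕ):ℂ)*θi)) * x s := by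
    intro s
    simp only [J1, Matrix.smul_apply, smul_eq_mul]
    rw [Finset.sum_congr rfl (fun s' _ => (by ring :
        Complex.exp (2*(π:ℂ)*Complex.I*(ρ₂:ℂ)*(t₁:ℂ)) * Sblk n₁ t₁ m₂ s s' * x s'
        = Complex.exp (2*(π:ℂ)*Complex.I*(ρ₂:ℂ)*(t₁:ℂ)) * (Sblk n₁ t₁ m₂ s s' * x s'))),
      ← Finset.mul_sum, hSx m₂ hm₂ s]
    ring
  -- row-sum factorization for the block matrix J₃
  have row_sum : ∀ (e Ct Cb : ℂ) (ct cb : Fin n₁ → Fin n₁ → ℂ) (p : Fin n₂ × Fin n₁),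
      (∑ q2 : Fin n₁, ct p.2 q2 * x q2) = Ct * x p.2 →
      (∑ q2 : Fin n₁, cb p.2 q2 * x q2) = Cb * x p.2 →
      (∑ q1 : Fin n₂, ∑ q2 : Fin n₁,
        (e * ((if (p.1:ℕ) < m₃ ∧ (q1:ℕ) = (p.1:ℕ) + (n₂ - m₃) then ct p.2 q2 else 0)
          + (if m₃ ≤ (p.1:ℕ) ∧ (q1:ℕ) + m₃ = (p.1:ℕ) then cb p.2 q2 else 0))) * (y q1 * x q2))
      = (∑ q1 : Fin n₂, ((if (p.1:ℕ) < m₃ ∧ (q1:ℕ) = (p.1:ℕ) + (n₂ - m₃) then Ct else 0)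
          + (if m₃ ≤ (p.1:ℕ) ∧ (q1:ℕ) + m₃ = (p.1:ℕ) then Cb else 0)) * y q1)
          * (e * x p.2) := by
    intro e Ct Cb ct cb p ht hb
    rw [Finset.sum_mul]
    refine Finset.sum_congr rfl fun q1 _ => ?_
    by_cases h1 : (p.1:ℕ) < m₃ ∧ (q1:ℕ) = (p.1:ℕ) + (n₂ - m₃) <;>
      by_cases h2 : m₃ ≤ (p.1:ℕ) ∧ (q1:ℕ) + m₃ = (p.1:ℕ)
    · simp only [if_pos h1, if_pos h2]
      rw [Finset.sum_congr rfl (fun q2 _ => (by ring :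
          (e * (ct p.2 q2 + cb p.2 q2)) * (y q1 * x q2)
          = (e * y q1) * (ct p.2 q2 * x q2) + (e * y q1) * (cb p.2 q2 * x q2))),
        Finset.sum_add_distrib, ← Finset.mul_sum, ← Finset.mul_sum, ht, hb]
      ring
    · simp only [if_pos h1, if_neg h2]
      rw [Finset.sum_congr rfl (fun q2 _ => (by ring :
          (e * (ct p.2 q2 + 0)) * (y q1 * x q2)
          = (e * y q1) * (ct p.2 q2 * x q2))), ← Finset.mul_sum, ht]
      ring
    · simp only [if_neg h1, if_pos h2]
      rw [Finset.sum_congr rfl (fun q2 _ => (by ring :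
          (e * (0 + cb p.2 q2)) * (y q1 * x q2)
          = (e * y q1) * (cb p.2 q2 * x q2))), ← Finset.mul_sum, hb]
      ring
    · simp only [if_neg h1, if_neg h2]
      simp
  -- the top-block eigen-scalar
  have hCD : (if m₁ ≤ m₂ then
        Complex.exp (-(2 * (π : ℂ) * Complex.I
            * ((t₂ : ℂ) + (ρ₁ : ℂ) * (ρ₄ : ℂ) * (t₁ : ℂ) - (ψ₁ : ℂ) * (t₁ : ℂ))))
          * Complex.exp (-(((m₂ - m₁ : ℕ)):ℂ)*θi)
      else
        Complex.exp (-(2 * (π : ℂ) * Complex.I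
            * ((t₂ : ℂ) - (ρ₂ : ℂ) * (ρ₄ : ℂ) * (t₁ : ℂ) - (ψ₁ : ℂ) * (t₁ : ℂ))))
          * Complex.exp (-(((n₁ - m₁ + m₂ : ℕ)):ℂ)*θi))
      * Complex.exp ((n₂:ℂ) * θij)
      = Complex.exp (2*(π:ℂ)*Complex.I*(ρ₂:ℂ)*(t₁:ℂ)) * Complex.exp (-((m₂:ℕ):ℂ)*θi) := by
    by_cases hm : m₁ ≤ m₂
    · rw [if_pos hm]
      have hρ : (ρ₂:ℂ) = (ρ₁:ℂ) - (ρ₁:ℂ)*(ρ₄:ℂ) + (ψ₁:ℂ) := by exact_mod_cast hcompat₁ hm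
      simp only [← Complex.exp_add]
      rw [Complex.exp_eq_exp_iff_exists_int]
      refine ⟨(j:ℤ), ?_⟩
      push_cast [Nat.cast_sub hm]
      linear_combination Z2 - (2*(π:ℂ)*Complex.I*(t₁:ℂ)) * hρ
    · rw [if_neg hm]
      have hρ : (ρ₂:ℂ) = (ρ₁:ℂ) - 1 + (ρ₂:ℂ)*(ρ₄:ℂ) + (ψ₁:ℂ) := by
        exact_mod_cast hcompat₂ (Nat.lt_of_not_le hm)
      simp only [← Complex.exp_add]
      rw [Complex.exp_eq_exp_iff_exists_int]
      refine ⟨(j:ℤ) - (i:ℤ), ?_⟩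
      push_cast [Nat.cast_sub hm₁]
      linear_combination Z2 - Z1 - (2*(π:ℂ)*Complex.I*(t₁:ℂ)) * hρ
  -- eigenvector relation for J₃
  have hJ3 : ∀ p : Fin n₂ × Fin n₁,
      (∑ q : Fin n₂ × Fin n₁,
          J3acute n₁ n₂ t₁ t₂ ρ₁ ρ₂ ρ₃ ρ₄ ψ₁ m₁ m₂ m₃ p q * (y q.1 * x q.2))
        = Complex.exp (2*(π:ℂ)*Complex.I*(ρ₃:ℂ)*(t₂:ℂ))
            * (Complex.exp (2*(π:ℂ)*Complex.I*(ρ₂:ℂ)*(t₁:ℂ)) * Complex.exp (-((m₂:ℕ):ℂ)*θi)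
              * Complex.exp (-((m₃:ℕ):ℂ)*θij))
            * (y p.1 * x p.2) := by
    intro p
    rw [Fintype.sum_prod_type]
    simp only [J3acute, Matrix.of_apply]
    have ht : (∑ q2 : Fin n₁, ((if m₁ ≤ m₂ then
        Complex.exp (-(2 * (π : ℂ) * Complex.I
            * ((t₂ : ℂ) + (ρ₁ : ℂ) * (ρ₄ : ℂ) * (t₁ : ℂ) - (ψ₁ : ℂ) * (t₁ : ℂ))))
          * Sblk n₁ t₁ (m₂ - m₁) p.2 q2
      else
        Complex.exp (-(2 * (π : ℂ) * Complex.I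
            * ((t₂ : ℂ) - (ρ₂ : ℂ) * (ρ₄ : ℂ) * (t₁ : ℂ) - (ψ₁ : ℂ) * (t₁ : ℂ))))
          * Sblk n₁ t₁ (n₁ - m₁ + m₂) p.2 q2)) * x q2)
        = (if m₁ ≤ m₂ then
            Complex.exp (-(2 * (π : ℂ) * Complex.I
                * ((t₂ : ℂ) + (ρ₁ : ℂ) * (ρ₄ : ℂ) * (t₁ : ℂ) - (ψ₁ : ℂ) * (t₁ : ℂ))))
              * Complex.exp (-(((m₂ - m₁ : ℕ)):ℂ)*θi)
          else
            Complex.exp (-(2 * (π : ℂ) * Complex.I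
                * ((t₂ : ℂ) - (ρ₂ : ℂ) * (ρ₄ : ℂ) * (t₁ : ℂ) - (ψ₁ : ℂ) * (t₁ : ℂ))))
              * Complex.exp (-(((n₁ - m₁ + m₂ : ℕ)):ℂ)*θi)) * x p.2 := by
      by_cases hm : m₁ ≤ m₂
      · simp only [if_pos hm]
        rw [Finset.sum_congr rfl (fun q2 _ => (by ring :
            Complex.exp (-(2 * (π : ℂ) * Complex.I
              * ((t₂ : ℂ) + (ρ₁ : ℂ) * (ρ₄ : ℂ) * (t₁ : ℂ) - (ψ₁ : ℂ) * (t₁ : ℂ))))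
              * Sblk n₁ t₁ (m₂ - m₁) p.2 q2 * x q2
            = Complex.exp (-(2 * (π : ℂ) * Complex.I
              * ((t₂ : ℂ) + (ρ₁ : ℂ) * (ρ₄ : ℂ) * (t₁ : ℂ) - (ψ₁ : ℂ) * (t₁ : ℂ))))
              * (Sblk n₁ t₁ (m₂ - m₁) p.2 q2 * x q2))),
          ← Finset.mul_sum, hSx (m₂ - m₁) (by omega) p.2]
        ring
      · simp only [if_neg hm]
        rw [Finset.sum_congr rfl (fun q2 _ => (by ring :
            Complex.exp (-(2 * (π : ℂ) * Complex.I
              * ((t₂ : ℂ) - (ρ₂ : ℂ) * (ρ₄ : ℂ) * (t₁ : ℂ) - (ψ₁ : ℂ) * (t₁ : ℂ))))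
              * Sblk n₁ t₁ (n₁ - m₁ + m₂) p.2 q2 * x q2
            = Complex.exp (-(2 * (π : ℂ) * Complex.I
              * ((t₂ : ℂ) - (ρ₂ : ℂ) * (ρ₄ : ℂ) * (t₁ : ℂ) - (ψ₁ : ℂ) * (t₁ : ℂ))))
              * (Sblk n₁ t₁ (n₁ - m₁ + m₂) p.2 q2 * x q2))),
          ← Finset.mul_sum, hSx (n₁ - m₁ + m₂) (by omega) p.2]
        ring
    refine Eq.trans (row_sum (Complex.exp (2 * (π : ℂ) * Complex.I * (ρ₃ : ℂ) * (t₂ : ℂ)))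
      _ _ (fun s s' => if m₁ ≤ m₂ then
        Complex.exp (-(2 * (π : ℂ) * Complex.I
            * ((t₂ : ℂ) + (ρ₁ : ℂ) * (ρ₄ : ℂ) * (t₁ : ℂ) - (ψ₁ : ℂ) * (t₁ : ℂ))))
          * Sblk n₁ t₁ (m₂ - m₁) s s'
      else
        Complex.exp (-(2 * (π : ℂ) * Complex.I
            * ((t₂ : ℂ) - (ρ₂ : ℂ) * (ρ₄ : ℂ) * (t₁ : ℂ) - (ψ₁ : ℂ) * (t₁ : ℂ))))
          * Sblk n₁ t₁ (n₁ - m₁ + m₂) s s')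
      (J1 n₁ t₁ ρ₂ m₂) p ht (hJ1x p.2)) ?_
    rw [sum_shift_exp m₃ hm₃ _ _ θij hCD y hy p.1]
    ring
  -- now the main computation
  funext p
  simp only [Matrix.mulVec, dotProduct, K3, Matrix.of_apply, Pi.smul_apply, smul_eq_mul]
  have main : (∑ q : Fin n₃ × Fin n₂ × Fin n₁,
      ((if (q.1 : ℕ) = (p.1 : ℕ) + 1 ∧ q.2 = p.2 then (1:ℂ) else 0)
        + (if (p.1 : ℕ) = n₃ - 1 ∧ (q.1 : ℕ) = 0
            then Complex.exp (2 * (π : ℂ) * Complex.I * (t₃ : ℂ))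
              * J3acute n₁ n₂ t₁ t₂ ρ₁ ρ₂ ρ₃ ρ₄ ψ₁ m₁ m₂ m₃ p.2 q.2 else 0)
        - (if p = q then 1 else 0)) * (z q.1 * y q.2.1 * x q.2.2))
      = (Complex.exp θijk - 1) * (z p.1 * y p.2.1 * x p.2.2) := by
    simp only [sub_mul, add_mul, Finset.sum_sub_distrib, Finset.sum_add_distrib]
    have S3 : (∑ q : Fin n₃ × Fin n₂ × Fin n₁,
        (if p = q then (1:ℂ) else 0) * (z q.1 * y q.2.1 * x q.2.2))
        = z p.1 * y p.2.1 * x p.2.2 := by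
      simp only [ite_mul, one_mul, zero_mul]
      rw [Finset.sum_ite_eq]
      simp
    rw [S3]
    by_cases hp : (p.1 : ℕ) = n₃ - 1
    · have S1 : (∑ q : Fin n₃ × Fin n₂ × Fin n₁,
          (if (q.1 : ℕ) = (p.1 : ℕ) + 1 ∧ q.2 = p.2 then (1:ℂ) else 0)
            * (z q.1 * y q.2.1 * x q.2.2)) = 0 :=
        Finset.sum_eq_zero fun q _ => by
          rw [if_neg, zero_mul]
          rintro ⟨h1, -⟩
          have := q.1.isLt
          omega
      have S2 : (∑ q : Fin n₃ × Fin n₂ × Fin n₁,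
          (if (p.1 : ℕ) = n₃ - 1 ∧ (q.1 : ℕ) = 0
            then Complex.exp (2 * (π : ℂ) * Complex.I * (t₃ : ℂ))
              * J3acute n₁ n₂ t₁ t₂ ρ₁ ρ₂ ρ₃ ρ₄ ψ₁ m₁ m₂ m₃ p.2 q.2 else 0)
            * (z q.1 * y q.2.1 * x q.2.2))
          = Complex.exp (2 * (π : ℂ) * Complex.I * (t₃ : ℂ))
            * (Complex.exp (2*(π:ℂ)*Complex.I*(ρ₃:ℂ)*(t₂:ℂ))
              * (Complex.exp (2*(π:ℂ)*Complex.I*(ρ₂:ℂ)*(t₁:ℂ)) * Complex.exp (-((m₂:ℕ):ℂ)*θi)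
                * Complex.exp (-((m₃:ℕ):ℂ)*θij))
              * (y p.2.1 * x p.2.2)) := by
        have step : ∀ q : Fin n₃ × Fin n₂ × Fin n₁,
            (if (p.1 : ℕ) = n₃ - 1 ∧ (q.1 : ℕ) = 0
              then Complex.exp (2 * (π : ℂ) * Complex.I * (t₃ : ℂ))
                * J3acute n₁ n₂ t₁ t₂ ρ₁ ρ₂ ρ₃ ρ₄ ψ₁ m₁ m₂ m₃ p.2 q.2 else 0)
              * (z q.1 * y q.2.1 * x q.2.2)
            = (if q.1 = (⟨0, by omega⟩ : Fin n₃)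
              then Complex.exp (2 * (π : ℂ) * Complex.I * (t₃ : ℂ))
                * (J3acute n₁ n₂ t₁ t₂ ρ₁ ρ₂ ρ₃ ρ₄ ψ₁ m₁ m₂ m₃ p.2 q.2
                  * (y q.2.1 * x q.2.2)) else 0) := by
          intro q
          by_cases h0 : (q.1 : ℕ) = 0
          · rw [if_pos ⟨hp, h0⟩, if_pos (Fin.ext h0)]
            have hz1 : z q.1 = 1 := by rw [hz, h0]; simp
            rw [hz1]; ring
          · rw [if_neg (by rintro ⟨-, h⟩; exact h0 h),
              if_neg (fun h => h0 (by rw [h])), zero_mul]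
        rw [Finset.sum_congr rfl fun q _ => step q, Fintype.sum_prod_type]
        simp only [Finset.sum_ite_irrel, Finset.sum_const_zero, Finset.sum_ite_eq',
          Finset.mem_univ, if_true]
        rw [← Finset.mul_sum, hJ3 p.2]
      rw [S1, S2]
      have hzp : z p.1 = Complex.exp (((n₃ - 1 : ℕ) : ℂ) * θijk) := by rw [hz, hp]
      have hbig : Complex.exp (2 * (π : ℂ) * Complex.I * (t₃ : ℂ))
          * (Complex.exp (2*(π:ℂ)*Complex.I*(ρ₃:ℂ)*(t₂:ℂ))
            * (Complex.exp (2*(π:ℂ)*Complex.I*(ρ₂:ℂ)*(t₁:ℂ)) * Complex.exp (-((m₂:ℕ):ℂ)*θi)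
              * Complex.exp (-((m₃:ℕ):ℂ)*θij)))
          = Complex.exp θijk * Complex.exp (((n₃ - 1 : ℕ) : ℂ) * θijk) := by
        simp only [← Complex.exp_add]
        rw [Complex.exp_eq_exp_iff_exists_int]
        refine ⟨-(k:ℤ), ?_⟩
        push_cast [Nat.cast_sub hn₃]
        linear_combination -Z3
      rw [hzp]
      linear_combination (y p.2.1 * x p.2.2) * hbig
    · have S2 : (∑ q : Fin n₃ × Fin n₂ × Fin n₁,
          (if (p.1 : ℕ) = n₃ - 1 ∧ (q.1 : ℕ) = 0
            then Complex.exp (2 * (π : ℂ) * Complex.I * (t₃ : ℂ))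
              * J3acute n₁ n₂ t₁ t₂ ρ₁ ρ₂ ρ₃ ρ₄ ψ₁ m₁ m₂ m₃ p.2 q.2 else 0)
            * (z q.1 * y q.2.1 * x q.2.2)) = 0 :=
        Finset.sum_eq_zero fun q _ => by
          rw [if_neg, zero_mul]
          rintro ⟨h1, -⟩
          exact hp h1
      have hlt : (p.1 : ℕ) + 1 < n₃ := by have := p.1.isLt; omega
      have S1 : (∑ q : Fin n₃ × Fin n₂ × Fin n₁,
          (if (q.1 : ℕ) = (p.1 : ℕ) + 1 ∧ q.2 = p.2 then (1:ℂ) else 0)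
            * (z q.1 * y q.2.1 * x q.2.2))
          = Complex.exp θijk * (z p.1 * y p.2.1 * x p.2.2) := by
        rw [Finset.sum_eq_single ((⟨(p.1 : ℕ) + 1, hlt⟩ : Fin n₃), p.2)]
        · rw [if_pos ⟨rfl, rfl⟩, one_mul]
          rw [hz, hz]
          have hc : ((((⟨(p.1 : ℕ) + 1, hlt⟩ : Fin n₃) : ℕ)) : ℂ) * θijk
              = θijk + ((p.1 : ℕ) : ℂ) * θijk := by push_cast; ring
          rw [hc, Complex.exp_add]
          ring
        · intro b _ hb
          rw [if_neg, zero_mul]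
          rintro ⟨h1, h2⟩
          exact hb (by rw [Prod.ext_iff]; exact ⟨Fin.ext h1, h2⟩)
        · intro h
          exact absurd (Finset.mem_univ _) h
      rw [S1, S2]
      ring
  rw [Finset.sum_congr rfl (fun q _ => (mul_assoc (1/(δz:ℂ)) _ _ :
      1/(δz:ℂ) * ((if (q.1 : ℕ) = (p.1 : ℕ) + 1 ∧ q.2 = p.2 then (1:ℂ) else 0)
        + (if (p.1 : ℕ) = n₃ - 1 ∧ (q.1 : ℕ) = 0
            then Complex.exp (2 * (π : ℂ) * Complex.I * (t₃ : ℂ))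
              * J3acute n₁ n₂ t₁ t₂ ρ₁ ρ₂ ρ₃ ρ₄ ψ₁ m₁ m₂ m₃ p.2 q.2 else 0)
        - (if p = q then 1 else 0)) * (z q.1 * y q.2.1 * x q.2.2)
      = _)),
    ← Finset.mul_sum, main]
  ring
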